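/- Dual-value bound on the Hölder half-space (inequality (25)): for every x ∈ ℝ^n and every u' ∈ ℝ^m satisfying ⟨A x, u'⟩ ≤ λ‖x‖₁, one has D(u') ≤ P(x). -/
import Mathlib


/-- Euclidean norm of a vector in ℝ^m. -/
noncomputable def norm2 {m : ℕ} (v : Fin m → ℝ) : ℝ := Real.sqrt (∑ i, v i ^ 2)

/-- ℓ1 norm of a vector in ℝ^n. -/
def norm1 {n : ℕ} (x : Fin n → ℝ) : ℝ := ∑ i, |x i|

/-- Canonical inner product on ℝ^m. -/
def dot {m : ℕ} (a u : Fin m → ℝ) : ℝ := ∑ i, a i * u i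

/-- Lasso primal objective P(x) = (1/2)‖y − Ax‖₂² + λ‖x‖₁. -/
noncomputable def Pobj {m n : ℕ} (A : Matrix (Fin m) (Fin n) ℝ) (y : Fin m → ℝ)
    (lam : ℝ) (x : Fin n → ℝ) : ℝ :=
  (1 / 2) * norm2 (y - A.mulVec x) ^ 2 + lam * norm1 x

/-- Lasso dual objective D(u) = (1/2)‖y‖₂² − (1/2)‖y − u‖₂². -/
noncomputable def Dobj {m : ℕ} (y u : Fin m → ℝ) : ℝ :=
  (1 / 2) * norm2 y ^ 2 - (1 / 2) * norm2 (y - u) ^ 2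

/-- Dual feasibility: u ∈ Δ iff |⟨a_i, u⟩| ≤ λ for every column a_i of A. -/
def feas {m n : ℕ} (A : Matrix (Fin m) (Fin n) ℝ) (lam : ℝ) (u : Fin m → ℝ) : Prop :=
  ∀ i : Fin n, |dot (fun j => A j i) u| ≤ lam

lemma norm2_sq {m : ℕ} (v : Fin m → ℝ) : norm2 v ^ 2 = ∑ i, v i ^ 2 := by
  rw [norm2, Real.sq_sqrt]
  exact Finset.sum_nonneg fun i _ => sq_nonneg _

/-- inequality (25): if ⟨A x, u'⟩ ≤ λ‖x‖₁ then D(u') ≤ P(x). -/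
theorem dual_value_bound_holder_halfspace (m n : ℕ) (hm : 0 < m) (hn : 0 < n)
    (A : Matrix (Fin m) (Fin n) ℝ) (y : Fin m → ℝ) (lam : ℝ) (hlam : 0 < lam)
    (x : Fin n → ℝ) (u' : Fin m → ℝ)
    (h : dot (A.mulVec x) u' ≤ lam * norm1 x) :
    Dobj y u' ≤ Pobj A y lam x := by
  set a := A.mulVec x with ha
  have key : (0:ℝ) ≤ ∑ i, (a i + u' i - y i) ^ 2 :=
    Finset.sum_nonneg fun i _ => sq_nonneg _
  have expand : ∑ i, (a i + u' i - y i) ^ 2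
      = ∑ i, (y i - a i) ^ 2 + ∑ i, (y i - u' i) ^ 2 - ∑ i, y i ^ 2
        + 2 * ∑ i, a i * u' i := by
    rw [← Finset.sum_add_distrib, ← Finset.sum_sub_distrib, Finset.mul_sum,
      ← Finset.sum_add_distrib]
    exact Finset.sum_congr rfl fun i _ => by ring
  have hdot : dot a u' = ∑ i, a i * u' i := rfl
  simp only [Pobj, Dobj, norm2_sq, ← ha, Pi.sub_apply]
  rw [hdot] at h
  linarith [expand ▸ key]
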